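/- (∛n)⁻¹-Theorem: Let C be a contraction on a Hilbert space H satisfying ‖C^n (1 - C)‖ ≤ K/(n+1) for all n ∈ ℕ. Then ‖C^n - exp(n(C - 1))‖ ≤ (2K + 2)/n^{1/3} for all n ≥ 1. -/

import Mathlib

open NormedSpace
open scoped Nat

lemma mom0 (x : ℝ) : ∑' k : ℕ, x ^ k / (k ! : ℝ) = Real.exp x := by
  rw [Real.exp_eq_exp_ℝ, exp_eq_tsum_div]

lemma summ0 (x : ℝ) : Summable (fun k : ℕ => x ^ k / (k ! : ℝ)) :=
  Real.summable_pow_div_factorial x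

lemma f1_shift (x : ℝ) (k : ℕ) :
    ((k : ℝ) + 1) * x ^ (k+1) / ((k+1)! : ℝ) = x * (x ^ k / (k ! : ℝ)) := by
  rw [Nat.factorial_succ]
  push_cast
  have : ((k:ℝ)+1) ≠ 0 := by positivity
  have : (k ! : ℝ) ≠ 0 := by positivity
  field_simp
  ring

lemma summ1 (x : ℝ) : Summable (fun k : ℕ => (k : ℝ) * x ^ k / (k ! : ℝ)) := by
  rw [← summable_nat_add_iff 1]
  refine ((summ0 x).mul_left x).congr fun k => ?_
  push_cast
  rw [← f1_shift x k]

lemma mom1 (x : ℝ) : ∑' k : ℕ, (k : ℝ) * x ^ k / (k ! : ℝ) = x * Real.exp x := by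
  rw [Summable.tsum_eq_zero_add (summ1 x)]
  push_cast
  simp only [f1_shift x]
  rw [tsum_mul_left, mom0]
  simp

lemma f2_shift (x : ℝ) (k : ℕ) :
    ((k : ℝ) + 2) * ((k : ℝ) + 1) * x ^ (k+2) / ((k+2)! : ℝ)
      = x ^ 2 * (x ^ k / (k ! : ℝ)) := by
  show ((k : ℝ) + 2) * ((k : ℝ) + 1) * x ^ (k+2) / (((k+1)+1)! : ℝ) = _
  rw [Nat.factorial_succ, Nat.factorial_succ]
  push_cast
  have h1 : ((k:ℝ)+1) ≠ 0 := by positivity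
  have h2 : ((k:ℝ)+2) ≠ 0 := by positivity
  have : (k ! : ℝ) ≠ 0 := by positivity
  field_simp
  ring

lemma summ2 (x : ℝ) : Summable (fun k : ℕ => (k : ℝ) * ((k:ℝ) - 1) * x ^ k / (k ! : ℝ)) := by
  rw [← summable_nat_add_iff 2]
  refine ((summ0 x).mul_left (x ^ 2)).congr fun k => ?_
  rw [← f2_shift x k]
  push_cast
  ring

lemma mom2 (x : ℝ) : ∑' k : ℕ, (k : ℝ) * ((k:ℝ) - 1) * x ^ k / (k ! : ℝ)
    = x ^ 2 * Real.exp x := by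
  have hs := summ2 x
  rw [Summable.tsum_eq_zero_add hs, Summable.tsum_eq_zero_add ((summable_nat_add_iff 1).2 hs)]
  have h : ∀ k : ℕ, ((k+1+1 : ℕ) : ℝ) * (((k+1+1 : ℕ):ℝ) - 1) * x ^ (k+1+1) / ((k+1+1)! : ℝ)
      = x ^ 2 * (x ^ k / (k ! : ℝ)) := by
    intro k
    rw [← f2_shift x k]
    push_cast
    ring_nf
  simp only [h]
  rw [tsum_mul_left, mom0]
  norm_num

lemma comb_eq (x : ℝ) (k : ℕ) :
    (x ^ k / (k ! : ℝ)) * ((k:ℝ) - x)^2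
      = (k : ℝ) * ((k:ℝ) - 1) * x ^ k / (k ! : ℝ)
        + (1 - 2*x) * ((k : ℝ) * x ^ k / (k ! : ℝ))
        + x^2 * (x ^ k / (k ! : ℝ)) := by
  field_simp
  ring

lemma comb_summable (x : ℝ) :
    Summable (fun k : ℕ => (x ^ k / (k ! : ℝ)) * ((k:ℝ) - x)^2) := by
  refine ((summ2 x).add (((summ1 x).mul_left (1 - 2*x)).add
    ((summ0 x).mul_left (x^2)))).congr fun k => ?_
  rw [comb_eq]; ring

lemma comb_sum (x : ℝ) :
    ∑' k : ℕ, (x ^ k / (k ! : ℝ)) * ((k:ℝ) - x)^2 = x * Real.exp x := by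
  calc ∑' k : ℕ, (x ^ k / (k ! : ℝ)) * ((k:ℝ) - x)^2
      = ∑' k : ℕ, ((k : ℝ) * ((k:ℝ) - 1) * x ^ k / (k ! : ℝ)
        + ((1 - 2*x) * ((k : ℝ) * x ^ k / (k ! : ℝ))
        + x^2 * (x ^ k / (k ! : ℝ)))) := by
        refine tsum_congr fun k => ?_; rw [comb_eq]; ring
    _ = x * Real.exp x := by
        rw [Summable.tsum_add (summ2 x) (((summ1 x).mul_left (1 - 2*x)).add ((summ0 x).mul_left (x^2))),
          Summable.tsum_add ((summ1 x).mul_left (1 - 2*x)) ((summ0 x).mul_left (x^2)),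
          tsum_mul_left, tsum_mul_left, mom0, mom1, mom2]
        ring

lemma exp_split {A : Type*} [NormedRing A] [NormedAlgebra ℝ A] [CompleteSpace A]
    (x : ℝ) (C : A) :
    exp (x • (C - 1)) = Real.exp (-x) • ∑' k : ℕ, (x ^ k / (k ! : ℝ)) • C ^ k := by
  have h1 : x • (C - 1) = x • C + algebraMap ℝ A (-x) := by
    rw [Algebra.algebraMap_eq_smul_one, smul_sub]
    module
  have hcomm : Commute (x • C) (algebraMap ℝ A (-x)) := (Algebra.commutes _ _).symm
  rw [h1, exp_add_of_commute_of_mem_ball (𝕂 := ℝ) hcomm ((expSeries_radius_eq_top ℝ A).symm ▸ edist_lt_top _ _)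
      ((expSeries_radius_eq_top ℝ A).symm ▸ edist_lt_top _ _), ← algebraMap_exp_comm, ← Real.exp_eq_exp_ℝ,
    Algebra.algebraMap_eq_smul_one, mul_smul_comm, mul_one]
  congr 1
  rw [exp_eq_tsum (𝕂 := ℝ)]
  refine tsum_congr fun k => ?_
  rw [smul_pow, smul_smul, div_eq_inv_mul]

section Op
variable {H : Type*} [NormedAddCommGroup H] [InnerProductSpace ℝ H] [CompleteSpace H]

lemma normCpow (C : H →L[ℝ] H) (hC : ‖C‖ ≤ 1) : ∀ m : ℕ, ‖C ^ m‖ ≤ 1 := by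
  intro m
  induction m with
  | zero => simpa [pow_zero, ContinuousLinearMap.one_def] using ContinuousLinearMap.norm_id_le
  | succ m ih =>
    calc ‖C ^ (m+1)‖ = ‖C ^ m * C‖ := by rw [pow_succ]
      _ ≤ ‖C ^ m‖ * ‖C‖ := norm_mul_le _ _
      _ ≤ 1 * 1 := mul_le_mul ih hC (norm_nonneg _) zero_le_one
      _ = 1 := one_mul 1

lemma pow_sub_bound (C : H →L[ℝ] H) (K : ℝ) (hK : 0 < K)
    (hRitt : ∀ n : ℕ, ‖C ^ n * (1 - C)‖ ≤ K / (n + 1)) (m d : ℕ) :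
    ‖C ^ m - C ^ (m + d)‖ ≤ K * d / (m + 1) := by
  have key : ∀ e : ℕ, C ^ m - C ^ (m + e) = ∑ i ∈ Finset.range e, C ^ (m + i) * (1 - C) := by
    intro e
    induction e with
    | zero => simp
    | succ e ih =>
      rw [Finset.sum_range_succ, ← ih]
      have : C ^ (m + e) * (1 - C) = C ^ (m + e) - C ^ (m + e + 1) := by
        rw [mul_sub, mul_one, ← pow_succ]
      rw [this, show m + (e + 1) = m + e + 1 from rfl]
      abel
  rw [key d]
  calc ‖∑ i ∈ Finset.range d, C ^ (m + i) * (1 - C)‖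
      ≤ ∑ i ∈ Finset.range d, ‖C ^ (m + i) * (1 - C)‖ := norm_sum_le _ _
    _ ≤ ∑ _i ∈ Finset.range d, K / (m + 1) := by
        refine Finset.sum_le_sum fun i _ => ?_
        refine (hRitt (m + i)).trans ?_
        apply div_le_div₀ (le_of_lt hK) le_rfl (by positivity)
        push_cast; linarith
    _ = d * (K / (m+1)) := by rw [Finset.sum_const, Finset.card_range, nsmul_eq_mul]
    _ = K * d / (m + 1) := by ring

end Op

lemma norm_smul_clm {H : Type*} [NormedAddCommGroup H] [InnerProductSpace ℝ H]
    (a : ℝ) (T : H →L[ℝ] H) (ha : 0 ≤ a) : ‖a • T‖ = a * ‖T‖ := by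
  rw [show ‖a • T‖ = ‖a‖ * ‖T‖ from norm_smul a T, Real.norm_eq_abs, abs_of_nonneg ha]

set_option maxHeartbeats 1000000 in
theorem inv_cbrt_n_theorem {H : Type*} [NormedAddCommGroup H] [InnerProductSpace ℝ H]
    [CompleteSpace H] (C : H →L[ℝ] H) (hC : ‖C‖ ≤ 1) (K : ℝ) (hK : 0 < K)
    (hRitt : ∀ n : ℕ, ‖C ^ n * (1 - C)‖ ≤ K / (n + 1)) (n : ℕ) (hn : 1 ≤ n) :
    ‖C ^ n - exp ((n : ℝ) • (C - 1))‖ ≤ (2 * K + 2) / (n : ℝ) ^ ((1 : ℝ) / 3) := by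
  set x : ℝ := (n : ℝ) with hxdef
  have hx1 : (1:ℝ) ≤ x := by rw [hxdef]; exact_mod_cast hn
  have hx0 : (0:ℝ) < x := by linarith
  set t : ℝ := x ^ ((2:ℝ)/3) with htdef
  have ht0 : 0 < t := Real.rpow_pos_of_pos hx0 _
  have htx : t ≤ x := by
    calc t = x ^ ((2:ℝ)/3) := rfl
      _ ≤ x ^ (1:ℝ) := Real.rpow_le_rpow_of_exponent_le hx1 (by norm_num)
      _ = x := Real.rpow_one x
  have hden : (0:ℝ) < x - t + 1 := by linarith
  have hcb0 : (0:ℝ) < x ^ ((1:ℝ)/3) := Real.rpow_pos_of_pos hx0 _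
  set A : ℝ := K * t / (x - t + 1) with hAdef
  set B : ℝ := 2 / t ^ 2 with hBdef
  have hA0 : 0 ≤ A := by positivity
  have hB0 : 0 ≤ B := by positivity
  -- the Poisson weights
  set p : ℕ → ℝ := fun k => Real.exp (-x) * (x ^ k / (k ! : ℝ)) with hpdef
  have hpsumm : Summable p := (summ0 x).mul_left _
  have hpnonneg : ∀ k, 0 ≤ p k := fun k =>
    mul_nonneg (Real.exp_nonneg _) (by positivity)
  have hpsum : ∑' k, p k = 1 := by
    rw [hpdef, tsum_mul_left, mom0, Real.exp_neg, inv_mul_cancel₀ (Real.exp_ne_zero x)]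
  have hpsq : ∑' k, p k * ((k:ℝ) - x)^2 = x := by
    have h : ∀ k : ℕ, p k * ((k:ℝ) - x)^2
        = Real.exp (-x) * ((x ^ k / (k ! : ℝ)) * ((k:ℝ) - x)^2) := fun k => by
      rw [hpdef]; ring
    rw [tsum_congr h, tsum_mul_left, comb_sum, Real.exp_neg]
    field_simp
  have hpsqsumm : Summable (fun k => p k * ((k:ℝ) - x)^2) := by
    refine ((comb_summable x).mul_left (Real.exp (-x))).congr fun k => ?_
    rw [hpdef]; ring
  -- the differences
  set D : ℕ → (H →L[ℝ] H) := fun k => C ^ n - C ^ k with hDdef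
  have hDle2 : ∀ k, ‖D k‖ ≤ 2 := fun k => by
    calc ‖D k‖ ≤ ‖C ^ n‖ + ‖C ^ k‖ := norm_sub_le _ _
      _ ≤ 1 + 1 := add_le_add (normCpow C hC n) (normCpow C hC k)
      _ = 2 := by norm_num
  -- pointwise bound
  have hDb : ∀ k : ℕ, ‖D k‖ ≤ A + B * ((k:ℝ) - x)^2 := by
    intro k
    rcases le_total n k with h | h
    · obtain ⟨d, rfl⟩ : ∃ d, k = n + d := ⟨k - n, by omega⟩
      have hb : ‖D (n + d)‖ ≤ K * d / (n + 1) := pow_sub_bound C K hK hRitt n d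
      have hkx : ((n + d : ℕ):ℝ) - x = (d : ℝ) := by push_cast [hxdef]; ring
      rw [hkx]
      by_cases hd : (d:ℝ) ≤ t
      · have h1 : K * d / (n + 1) ≤ A := by
          rw [hAdef]
          apply div_le_div₀ (by positivity) (by nlinarith) hden (by push_cast [hxdef]; linarith)
        have h2 : 0 ≤ B * (d:ℝ)^2 := by positivity
        linarith [hb]
      · push_neg at hd
        have h2 : (2:ℝ) ≤ B * (d:ℝ)^2 := by
          rw [hBdef]
          rw [div_mul_eq_mul_div, le_div_iff₀ (by positivity)]
          nlinarith
        linarith [hDle2 (n + d)]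
    · obtain ⟨d, rfl⟩ : ∃ d, n = k + d := ⟨n - k, by omega⟩
      have hb : ‖D k‖ ≤ K * d / (k + 1) := by
        rw [hDdef]
        simpa [norm_sub_rev] using pow_sub_bound C K hK hRitt k d
      have hkx : ((k : ℕ):ℝ) - x = -(d : ℝ) := by push_cast [hxdef]; ring
      rw [hkx, neg_sq]
      by_cases hd : (d:ℝ) ≤ t
      · have hk1 : x - t + 1 ≤ (k:ℝ) + 1 := by
          have : x = (k:ℝ) + (d:ℝ) := by push_cast [hxdef]; ring
          linarith
        have h1 : K * d / (k + 1) ≤ A := by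
          rw [hAdef]
          apply div_le_div₀ (by positivity) (by nlinarith) hden hk1
        have h2 : 0 ≤ B * (d:ℝ)^2 := by positivity
        linarith [hb]
      · push_neg at hd
        have h2 : (2:ℝ) ≤ B * (d:ℝ)^2 := by
          rw [hBdef, div_mul_eq_mul_div, le_div_iff₀ (by positivity)]
          nlinarith
        linarith [hDle2 k]
  -- summability of operator series
  have hsummXk : Summable (fun k : ℕ => (x ^ k / (k ! : ℝ)) • C ^ k) := by
    refine Summable.of_norm_bounded (summ0 x) fun k => ?_
    rw [norm_smul_clm _ _ (by positivity)]
    exact mul_le_of_le_one_right (by positivity) (normCpow C hC k)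
  have hsummCk : Summable (fun k : ℕ => p k • C ^ k) := by
    refine Summable.of_norm_bounded hpsumm fun k => ?_
    rw [norm_smul_clm _ _ (hpnonneg k)]
    exact mul_le_of_le_one_right (hpnonneg k) (normCpow C hC k)
  have hsummCn : Summable (fun k : ℕ => p k • C ^ n) := hpsumm.smul_const _
  -- the key identity
  have hexp : exp (x • (C - 1)) = ∑' k, p k • C ^ k := by
    rw [exp_split x C, ← Summable.tsum_const_smul (Real.exp (-x)) hsummXk]
    exact tsum_congr fun k => by rw [smul_smul, hpdef]
  have hdiff : C ^ n - exp (x • (C - 1)) = ∑' k, p k • D k := by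
    have hCn : (C ^ n : H →L[ℝ] H) = ∑' k, p k • C ^ n := by
      rw [Summable.tsum_smul_const hpsumm, hpsum, one_smul]
    rw [hexp]
    conv_lhs => rw [hCn]
    rw [← Summable.tsum_sub hsummCn hsummCk]
    exact tsum_congr fun k => (smul_sub _ _ _).symm
  -- norm estimate
  have hnormsumm : Summable (fun k => ‖p k • D k‖) := by
    refine Summable.of_nonneg_of_le (fun k => norm_nonneg _) (fun k => ?_) (hpsumm.mul_left 2)
    rw [norm_smul_clm _ _ (hpnonneg k)]
    calc p k * ‖D k‖ ≤ p k * 2 :=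
          mul_le_mul_of_nonneg_left (hDle2 k) (hpnonneg k)
      _ = 2 * p k := by ring
  have hubsumm : Summable (fun k => p k * (A + B * ((k:ℝ) - x)^2)) := by
    refine ((hpsumm.mul_left A).add (hpsqsumm.mul_left B)).congr fun k => ?_
    ring
  have key : ‖C ^ n - exp (x • (C - 1))‖ ≤ A + B * x := by
    calc ‖C ^ n - exp (x • (C - 1))‖ = ‖∑' k, p k • D k‖ := by rw [hdiff]
      _ ≤ ∑' k, ‖p k • D k‖ := norm_tsum_le_tsum_norm hnormsumm
      _ ≤ ∑' k, p k * (A + B * ((k:ℝ) - x)^2) := by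
          refine Summable.tsum_le_tsum (fun k => ?_) hnormsumm hubsumm
          rw [norm_smul_clm _ _ (hpnonneg k)]
          exact mul_le_mul_of_nonneg_left (hDb k) (hpnonneg k)
      _ = A * ∑' k, p k + B * ∑' k, p k * ((k:ℝ) - x)^2 := by
          have hre : ∀ k : ℕ, p k * (A + B * ((k:ℝ) - x)^2)
              = A * p k + B * (p k * ((k:ℝ) - x)^2) := fun k => by ring
          rw [tsum_congr hre,
            Summable.tsum_add (hpsumm.mul_left A) (hpsqsumm.mul_left B)]
          congr 1
          · exact tsum_mul_left
          · exact tsum_mul_left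
      _ = A + B * x := by rw [hpsum, hpsq]; ring
  -- final arithmetic
  have ht2 : t ^ 2 = x * x ^ ((1:ℝ)/3) := by
    rw [htdef, ← Real.rpow_natCast (x ^ ((2:ℝ)/3)) 2, ← Real.rpow_mul hx0.le]
    rw [show ((2:ℝ)/3 * (2:ℕ) : ℝ) = 1 + 1/3 by norm_num]
    rw [Real.rpow_add hx0, Real.rpow_one]
  have ht3 : t ^ 3 = x ^ 2 := by
    rw [htdef, ← Real.rpow_natCast (x ^ ((2:ℝ)/3)) 3, ← Real.rpow_mul hx0.le]
    rw [show ((2:ℝ)/3 * (3:ℕ) : ℝ) = (2:ℕ) by norm_num]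
    rw [Real.rpow_natCast]
  have htx13 : t * x ^ ((1:ℝ)/3) = x := by
    rw [htdef, ← Real.rpow_add hx0]
    norm_num
  have h2t : 2 * t ≤ x + 2 := by
    have h3 : (2*t)^3 ≤ (x+2)^3 := by nlinarith [hx1, sq_nonneg (x-1), sq_nonneg x, ht0]
    exact (pow_le_pow_iff_left₀ (by positivity) (by positivity) (by norm_num)).1 h3
  have hAle : A ≤ 2 * K / x ^ ((1:ℝ)/3) := by
    rw [hAdef, div_le_div_iff₀ hden hcb0, mul_assoc, htx13]
    nlinarith
  have hBle : B * x = 2 / x ^ ((1:ℝ)/3) := by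
    rw [hBdef, ht2]
    field_simp
  calc ‖C ^ n - exp (x • (C - 1))‖ ≤ A + B * x := key
    _ ≤ 2 * K / x ^ ((1:ℝ)/3) + 2 / x ^ ((1:ℝ)/3) := by rw [hBle]; linarith
    _ = (2 * K + 2) / x ^ ((1:ℝ)/3) := by rw [← add_div]
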